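/- Let x0 and x1 be real numbers such that 0 < x0 < x1 < 1 and ν(x0) = ν(x1) = 1. For any pair of real numbers r0 and r1 with 0 < r0 < x0 and x1 < r1 < 1, there exist a real number Λ with 0 < Λ < 1 and a constant C > 0 such that for every pair of integers n, j with n ≥ 1, 1 ≤ j ≤ n, and j/n ∈ [0, r0] ∪ [r1, 1], one has n^{−n}·a(n,j) ≤ C·√n·Λ^n. -/

import Mathlib

noncomputable def stirling2 (n j : ℕ) : ℝ :=
  (1 / (Nat.factorial j : ℝ)) *
    ∑ i ∈ Finset.range (j + 1), (-1 : ℝ) ^ i * (Nat.choose j i : ℝ) * ((j - i : ℕ) : ℝ) ^ n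

noncomputable def a (n j : ℕ) : ℝ :=
  (Nat.choose n j : ℝ) * (Nat.factorial j : ℝ) * stirling2 n j

noncomputable def varphi (x : ℝ) : ℝ := x ^ (-x) * (1 - x) ^ (-(1 - x))

noncomputable def nu (x : ℝ) : ℝ := x * Real.exp (-x) * varphi x ^ 2

section Aux
open Finset Real Set

noncomputable def Asum (n j : ℕ) : ℝ :=
  ∑ i ∈ Finset.range (j + 1), (-1 : ℝ) ^ i * (Nat.choose j i : ℝ) * ((j - i : ℕ) : ℝ) ^ n


lemma choose_id (j i : ℕ) : (j + 1 - i) * Nat.choose (j+1) i = (j+1) * Nat.choose j i := by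
  have h1 := Nat.choose_succ_right_eq (j+1) i
  have h2 := Nat.add_one_mul_choose_eq j i
  rw [mul_comm, ← h1, ← h2]

lemma Asum_rec (n j : ℕ) :
    Asum (n+1) (j+1) = ((j:ℝ)+1) * (Asum n j + Asum n (j+1)) := by
  have key : ∀ i : ℕ, (-1:ℝ)^i * (Nat.choose (j+1) i : ℝ) * ((j+1-i : ℕ):ℝ) ^ (n+1)
      = ((j:ℝ)+1) * ((-1:ℝ)^i * (Nat.choose j i : ℝ) * ((j+1-i : ℕ):ℝ) ^ n) := by
    intro i
    have h := choose_id j i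
    have h' : ((j + 1 - i : ℕ):ℝ) * ((Nat.choose (j+1) i : ℕ):ℝ) = ((j:ℝ)+1) * (Nat.choose j i : ℝ) := by
      exact_mod_cast congrArg (Nat.cast : ℕ → ℝ) h
    rw [pow_succ]
    linear_combination (-1:ℝ)^i * ((j+1-i : ℕ):ℝ)^n * h'
  have step1 : Asum (n+1) (j+1)
      = ((j:ℝ)+1) * ∑ i ∈ range (j+2), (-1:ℝ)^i * (Nat.choose j i : ℝ) * ((j+1-i : ℕ):ℝ) ^ n := by
    rw [Asum, Finset.mul_sum]
    exact Finset.sum_congr rfl fun i _ => key i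
  rw [step1]
  congr 1
  have expand : ∀ i ∈ range (j+2), (-1:ℝ)^i * (Nat.choose j i : ℝ) * ((j+1-i : ℕ):ℝ) ^ n
      = (-1:ℝ)^i * (Nat.choose (j+1) i : ℝ) * ((j+1-i : ℕ):ℝ) ^ n
        + ((-1:ℝ)^i * ((Nat.choose j i : ℝ) - (Nat.choose (j+1) i : ℝ))) * ((j+1-i : ℕ):ℝ) ^ n := by
    intro i _; ring
  rw [Finset.sum_congr rfl expand, Finset.sum_add_distrib]
  rw [add_comm (Asum n j)]
  congr 1
  rw [Finset.sum_range_succ']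
  simp only [Nat.choose_zero_right, Nat.cast_one, sub_self, pow_zero, one_mul, mul_zero,
    zero_mul, add_zero]
  rw [Asum]
  apply Finset.sum_congr rfl
  intro i hi
  have hc : (Nat.choose (j+1) (i+1) : ℝ) = (Nat.choose j i : ℝ) + (Nat.choose j (i+1) : ℝ) := by
    exact_mod_cast congrArg (Nat.cast : ℕ → ℝ) (Nat.choose_succ_succ j i)
  have hs : (j + 1 - (i+1) : ℕ) = (j - i : ℕ) := by omega
  rw [hs, hc]
  ring

lemma Asum_vanish : ∀ n j : ℕ, n < j → Asum n j = 0 := by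
  intro n
  induction n with
  | zero =>
    intro j hj
    obtain ⟨m, rfl⟩ : ∃ m, j = m + 1 := ⟨j - 1, by omega⟩
    have h0 := @Int.alternating_sum_range_choose (m+1)
    rw [if_neg (Nat.succ_ne_zero m)] at h0
    rw [Asum]
    simp only [pow_zero, mul_one]
    exact_mod_cast h0
  | succ n ih =>
    intro j hj
    obtain ⟨m, rfl⟩ : ∃ m, j = m + 1 := ⟨j - 1, by omega⟩
    rw [Asum_rec, ih m (by omega), ih (m+1) (by omega)]
    ring


lemma Asum_one (m : ℕ) (hm : 1 ≤ m) : Asum m 1 = 1 := by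
  rw [Asum]
  rw [Finset.sum_range_succ, Finset.sum_range_succ, Finset.sum_range_zero]
  simp [zero_pow (by omega : m ≠ 0)]

lemma Asum_le : ∀ n j : ℕ, 1 ≤ j → j ≤ n →
    Asum n j ≤ (Nat.factorial j : ℝ) * (Nat.choose n j : ℝ) * (j:ℝ) ^ (n - j) := by
  intro n
  induction n with
  | zero => intro j h1 h2; omega
  | succ n ih =>
    intro j h1 h2
    match j, h1 with
    | 1, _ =>
      rw [Asum_one (n+1) (by omega)]
      simp only [Nat.factorial_one, Nat.cast_one, one_mul, Nat.choose_one_right, one_pow, mul_one]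
      exact_mod_cast Nat.succ_le_succ (Nat.zero_le n)
    | (j+2), _ =>
      have hj1 : j + 1 ≤ n := by omega
      obtain ⟨m, rfl⟩ : ∃ m, n = (j+1) + m := ⟨n - (j+1), by omega⟩
      rw [Asum_rec]
      have hA1 := ih (j+1) (by omega) (by omega)
      have hnn : (0:ℝ) ≤ ((j:ℝ)+2) := by positivity
      have hcast : ((j+1 : ℕ):ℝ) + 1 = (j:ℝ)+2 := by push_cast; ring
      have hf : ((j+2).factorial : ℝ) = ((j:ℝ)+2) * ((j+1).factorial : ℝ) := by
        rw [show (j+2) = (j+1)+1 by ring, Nat.factorial_succ]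
        push_cast; ring
      match m with
      | 0 =>
        rw [Asum_vanish (j+1) (j+2) (by omega)]
        have e1 : (j + 1 - (j+1) : ℕ) = 0 := by omega
        rw [e1] at hA1
        have hch1 : (Nat.choose (j+1) (j+1) : ℝ) = 1 := by
          rw [Nat.choose_self]; norm_num
        rw [hch1] at hA1
        have e2 : (j + 1 + 0 + 1 - (j+2) : ℕ) = 0 := by omega
        have hch2 : (Nat.choose (j+1+0+1) (j+2) : ℝ) = 1 := by
          rw [show j+1+0+1 = j+2 by omega, Nat.choose_self]; norm_num
        rw [e2, hch2, hcast]
        simp only [pow_zero, mul_one, add_zero] at hA1 ⊢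
        rw [hf]
        have hfacnn : (0:ℝ) ≤ ((j+1).factorial : ℝ) := by positivity
        nlinarith [hA1]
      | (m+1) =>
        have hA2 := ih (j+2) (by omega) (by omega)
        have e1 : (j + 1 + (m+1) - (j+1) : ℕ) = m + 1 := by omega
        have e2 : (j + 1 + (m+1) - (j+2) : ℕ) = m := by omega
        have e3 : (j + 1 + (m+1) + 1 - (j+2) : ℕ) = m + 1 := by omega
        rw [e1] at hA1; rw [e2] at hA2; rw [e3]
        set N := j + 1 + (m+1) with hN
        set C1 : ℝ := (Nat.choose N (j+1) : ℝ) with hC1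
        set C2 : ℝ := (Nat.choose N (j+2) : ℝ) with hC2
        set f1 : ℝ := ((j+1).factorial : ℝ) with hf1
        set F : ℝ := ((j+2).factorial : ℝ) with hF
        have hbase : ((j+1 : ℕ):ℝ) = (j:ℝ)+1 := by push_cast; ring
        have hbase2 : ((j+2 : ℕ):ℝ) = (j:ℝ)+2 := by push_cast; ring
        rw [hbase] at hA1
        rw [hbase2] at hA2
        have pascal : (Nat.choose (N+1) (j+2) : ℝ) = C1 + C2 := by
          rw [hC1, hC2]
          exact_mod_cast congrArg (Nat.cast : ℕ → ℝ) (Nat.choose_succ_succ N (j+1))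
        have hpowle : ((j:ℝ)+1) ^ (m+1) ≤ ((j:ℝ)+2) ^ (m+1) :=
          pow_le_pow_left₀ (by positivity) (by linarith) _
        have hC1nn : (0:ℝ) ≤ C1 := by rw [hC1]; positivity
        have hC2nn : (0:ℝ) ≤ C2 := by rw [hC2]; positivity
        have hf1nn : (0:ℝ) ≤ f1 := by rw [hf1]; positivity
        have hFnn : (0:ℝ) ≤ F := by rw [hF]; positivity
        have t1 : ((j:ℝ)+2) * Asum N (j+1) ≤ F * C1 * ((j:ℝ)+2)^(m+1) := by
          have s1 : ((j:ℝ)+2) * Asum N (j+1) ≤ ((j:ℝ)+2) * (f1 * C1 * ((j:ℝ)+1)^(m+1)) :=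
            mul_le_mul_of_nonneg_left hA1 hnn
          have s2 : ((j:ℝ)+2) * (f1 * C1 * ((j:ℝ)+1)^(m+1))
              ≤ ((j:ℝ)+2) * (f1 * C1 * ((j:ℝ)+2)^(m+1)) := by
            apply mul_le_mul_of_nonneg_left _ hnn
            exact mul_le_mul_of_nonneg_left hpowle (by positivity)
          have s3 : ((j:ℝ)+2) * (f1 * C1 * ((j:ℝ)+2)^(m+1)) = F * C1 * ((j:ℝ)+2)^(m+1) := by
            rw [hf]; ring
          linarith
        have t2 : ((j:ℝ)+2) * Asum N (j+2) ≤ F * C2 * ((j:ℝ)+2)^(m+1) := by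
          have s1 : ((j:ℝ)+2) * Asum N (j+2) ≤ ((j:ℝ)+2) * (F * C2 * ((j:ℝ)+2)^m) :=
            mul_le_mul_of_nonneg_left hA2 hnn
          have s3 : ((j:ℝ)+2) * (F * C2 * ((j:ℝ)+2)^m) = F * C2 * ((j:ℝ)+2)^(m+1) := by
            rw [pow_succ]; ring
          linarith
        rw [hcast, pascal, hbase2]
        nlinarith [t1, t2]


lemma varphi_one : varphi 1 = 1 := by
  rw [varphi]
  norm_num

lemma varphi_nonneg {x : ℝ} (hx : 0 ≤ x) (hx1 : x ≤ 1) : 0 ≤ varphi x :=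
  mul_nonneg (Real.rpow_nonneg hx _) (Real.rpow_nonneg (by linarith) _)

lemma choose_le_varphi_pow (n j : ℕ) (hn : 1 ≤ n) (hj : 1 ≤ j) (hjn : j ≤ n) :
    (Nat.choose n j : ℝ) ≤ varphi ((j:ℝ)/n) ^ n := by
  have hnpos : (0:ℝ) < n := by exact_mod_cast hn
  rcases eq_or_lt_of_le hjn with rfl | hlt
  · rw [div_self (ne_of_gt hnpos), varphi_one, Nat.choose_self, one_pow]; norm_num
  · set x : ℝ := (j:ℝ)/n with hxdef
    have hx0 : 0 < x := div_pos (by exact_mod_cast hj) hnpos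
    have hx1 : x < 1 := by
      rw [hxdef, div_lt_one hnpos]
      exact_mod_cast hlt
    have h1x : 0 < 1 - x := by linarith
    have hxn : x * n = j := by
      rw [hxdef, div_mul_cancel₀]; exact ne_of_gt hnpos
    have h1xn : (1 - x) * n = ((n - j : ℕ) : ℝ) := by
      rw [Nat.cast_sub hjn, sub_mul, one_mul, hxn]
    have hv : varphi x ^ n = (x ^ j)⁻¹ * ((1 - x) ^ (n - j))⁻¹ := by
      rw [varphi, mul_pow]
      rw [← Real.rpow_natCast (x ^ (-x)) n, ← Real.rpow_natCast ((1-x) ^ (-(1-x))) n]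
      rw [← Real.rpow_mul (le_of_lt hx0), ← Real.rpow_mul (le_of_lt h1x)]
      rw [neg_mul, neg_mul, hxn, h1xn]
      rw [Real.rpow_neg (le_of_lt hx0), Real.rpow_neg (le_of_lt h1x)]
      rw [Real.rpow_natCast, Real.rpow_natCast]
    rw [hv]
    have hsum : ∑ k ∈ range (n+1), x ^ k * (1-x) ^ (n-k) * (Nat.choose n k : ℝ) = 1 := by
      rw [← add_pow]
      norm_num
    have hterm : x ^ j * (1-x) ^ (n-j) * (Nat.choose n j : ℝ) ≤ 1 := by
      have h := Finset.single_le_sum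
        (f := fun k => x ^ k * (1-x) ^ (n-k) * (Nat.choose n k : ℝ))
        (fun k _ => by positivity) (Finset.mem_range.mpr (by omega : j < n+1))
      rw [hsum] at h
      exact h
    calc (Nat.choose n j : ℝ)
        = (x ^ j * (1-x) ^ (n-j))⁻¹ * (x ^ j * (1-x) ^ (n-j) * (Nat.choose n j : ℝ)) := by
          field_simp
      _ ≤ (x ^ j * (1-x) ^ (n-j))⁻¹ * 1 := by
          apply mul_le_mul_of_nonneg_left hterm (by positivity)
      _ = (x ^ j)⁻¹ * ((1 - x) ^ (n - j))⁻¹ := by rw [mul_one, mul_inv]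

lemma factorial_le_stirling (n : ℕ) (hn : 1 ≤ n) :
    (Nat.factorial n : ℝ) ≤ Real.exp 1 * Real.sqrt n * ((n:ℝ) / Real.exp 1) ^ n := by
  obtain ⟨m, rfl⟩ : ∃ m, n = m + 1 := ⟨n - 1, by omega⟩
  have h1 := Stirling.stirlingSeq'_antitone (Nat.zero_le m)
  simp only [Function.comp_apply, Nat.succ_eq_add_one, Nat.zero_add] at h1
  rw [Stirling.stirlingSeq_one] at h1
  rw [Stirling.stirlingSeq] at h1
  set c : ℝ := ((m+1:ℕ):ℝ) with hc
  have hcpos : (0:ℝ) < c := by rw [hc]; exact_mod_cast Nat.succ_pos m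
  have hd : (0:ℝ) < Real.sqrt (2 * c) * (c / Real.exp 1) ^ (m+1) := by positivity
  rw [div_le_iff₀ hd] at h1
  have hsqrt : Real.sqrt (2 * c) = Real.sqrt 2 * Real.sqrt c := by
    rw [← Real.sqrt_mul (by norm_num)]
  have h2 : Real.exp 1 / Real.sqrt 2 * (Real.sqrt (2 * c) * (c / Real.exp 1) ^ (m+1))
      = Real.exp 1 * Real.sqrt c * (c / Real.exp 1) ^ (m+1) := by
    rw [hsqrt]
    have h2ne : Real.sqrt 2 ≠ 0 := by positivity
    field_simp
  rw [h2] at h1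
  exact h1


lemma nu_pos {x : ℝ} (hx : 0 < x) (hx1 : x < 1) : 0 < nu x := by
  rw [nu, varphi]
  have h1 : (0:ℝ) < x ^ (-x) := Real.rpow_pos_of_pos hx _
  have h2 : (0:ℝ) < (1-x) ^ (-(1-x)) := Real.rpow_pos_of_pos (by linarith) _
  positivity

noncomputable def gfun (x : ℝ) : ℝ :=
  Real.log x + (-x + (-(2 * (x * Real.log x)) + -(2 * ((1-x) * Real.log (1-x)))))

lemma log_nu_eq {x : ℝ} (hx : 0 < x) (hx1 : x < 1) : Real.log (nu x) = gfun x := by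
  have h1x : (0:ℝ) < 1 - x := by linarith
  have hv : 0 < varphi x := by
    rw [varphi]
    exact mul_pos (Real.rpow_pos_of_pos hx _) (Real.rpow_pos_of_pos h1x _)
  rw [nu, Real.log_mul (by positivity) (by positivity),
      Real.log_mul (ne_of_gt hx) (Real.exp_ne_zero _), Real.log_exp,
      Real.log_pow, varphi, Real.log_mul (by positivity) (by positivity),
      Real.log_rpow hx, Real.log_rpow h1x, gfun]
  push_cast
  ring

lemma strictConcave_gfun : StrictConcaveOn ℝ (Set.Ioo (0:ℝ) 1) gfun := by
  have hsub1 : Set.Ioo (0:ℝ) 1 ⊆ Set.Ioi 0 := fun x hx => hx.1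
  have hsub2 : Set.Ioo (0:ℝ) 1 ⊆ Set.Ici 0 := fun x hx => le_of_lt hx.1
  have h1 : StrictConcaveOn ℝ (Set.Ioo (0:ℝ) 1) Real.log :=
    strictConcaveOn_log_Ioi.subset hsub1 (convex_Ioo 0 1)
  have h2 : ConcaveOn ℝ (Set.Ioo (0:ℝ) 1) (fun x : ℝ => -x) := by
    exact (convexOn_id (convex_Ioo 0 1)).neg
  have h3 : ConcaveOn ℝ (Set.Ioo (0:ℝ) 1) (fun x : ℝ => -(2 * (x * Real.log x))) := by
    have := ((Real.convexOn_mul_log.subset hsub2 (convex_Ioo 0 1)).smul (by norm_num : (0:ℝ) ≤ 2)).neg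
    exact this.congr (fun x _ => by simp only [Pi.neg_apply, smul_eq_mul])
  have h4 : ConcaveOn ℝ (Set.Ioo (0:ℝ) 1) (fun x : ℝ => -(2 * ((1-x) * Real.log (1-x)))) := by
    have hconv : ConvexOn ℝ (Set.Ioo (0:ℝ) 1) (fun x : ℝ => (1-x) * Real.log (1-x)) := by
      constructor
      · exact convex_Ioo 0 1
      · intro x hx y hy a b ha hb hab
        have hx' : (1:ℝ) - x ∈ Set.Ici (0:ℝ) := by
          simp only [Set.mem_Ici]; linarith [hx.2]
        have hy' : (1:ℝ) - y ∈ Set.Ici (0:ℝ) := by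
          simp only [Set.mem_Ici]; linarith [hy.2]
        have key := Real.convexOn_mul_log.2 hx' hy' ha hb hab
        have harg : a • ((1:ℝ)-x) + b • ((1:ℝ)-y) = 1 - (a • x + b • y) := by
          simp only [smul_eq_mul]
          nlinarith [hab]
        rw [harg] at key
        simpa only [smul_eq_mul] using key
    have := (hconv.smul (by norm_num : (0:ℝ) ≤ 2)).neg
    exact this.congr (fun x _ => by simp only [Pi.neg_apply, smul_eq_mul])
  have hsum := h1.add_concaveOn (h2.add (h3.add h4))
  exact hsum.congr (fun x _ => by simp only [Pi.add_apply, gfun])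


lemma chord_coeff {u v w : ℝ} (huv : u < v) (hvw : v < w) :
    ∃ p q : ℝ, 0 < p ∧ 0 < q ∧ p + q = 1 ∧ p * u + q * w = v := by
  have h : (0:ℝ) < w - u := by linarith
  refine ⟨(w - v)/(w - u), (v - u)/(w - u), div_pos (by linarith) h, div_pos (by linarith) h, ?_, ?_⟩
  · field_simp; ring
  · field_simp; ring

section Tail
variable {x0 x1 r0 r1 : ℝ}
  (hx0 : 0 < x0) (hx01 : x0 < x1) (hx1 : x1 < 1)
  (hnu0 : nu x0 = 1) (hnu1 : nu x1 = 1)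
  (hr0 : 0 < r0) (hr0x : r0 < x0) (hr1x : x1 < r1) (hr1 : r1 < 1)

include hx0 hx01 hx1 hnu0 hnu1 hr0 hr0x hr1x hr1

lemma g_concave_lt {t u v : ℝ} (ht : t ∈ Set.Ioo (0:ℝ) 1) (hu : u ∈ Set.Ioo (0:ℝ) 1)
    (hv : v ∈ Set.Ioo (0:ℝ) 1) (htu : t < u) (huv : u < v) :
    ∃ p q : ℝ, 0 < p ∧ 0 < q ∧ p + q = 1 ∧
      p * gfun t + q * gfun v < gfun u := by
  obtain ⟨p, q, hp, hq, hpq, heq⟩ := chord_coeff htu huv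
  have key := strictConcave_gfun.2 ht hv (ne_of_lt (lt_trans htu huv)) hp hq hpq
  simp only [smul_eq_mul] at key
  rw [heq] at key
  exact ⟨p, q, hp, hq, hpq, key⟩

lemma g_x0 : gfun x0 = 0 := by
  rw [← log_nu_eq hx0 (lt_trans hx01 hx1), hnu0, Real.log_one]

lemma g_x1 : gfun x1 = 0 := by
  rw [← log_nu_eq (lt_trans hx0 hx01) hx1, hnu1, Real.log_one]

lemma g_r0_neg : gfun r0 < 0 := by
  have h0 := g_x0 hx0 hx01 hx1 hnu0 hnu1 hr0 hr0x hr1x hr1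
  have h1 := g_x1 hx0 hx01 hx1 hnu0 hnu1 hr0 hr0x hr1x hr1
  obtain ⟨p, q, hp, hq, hpq, key⟩ := g_concave_lt hx0 hx01 hx1 hnu0 hnu1 hr0 hr0x hr1x hr1
    (show r0 ∈ Set.Ioo (0:ℝ) 1 from ⟨hr0, by linarith⟩)
    (show x0 ∈ Set.Ioo (0:ℝ) 1 from ⟨hx0, by linarith⟩)
    (show x1 ∈ Set.Ioo (0:ℝ) 1 from ⟨by linarith, hx1⟩) hr0x hx01
  rw [h0, h1] at key
  nlinarith [key, hp, hq]

lemma g_r1_neg : gfun r1 < 0 := by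
  have h0 := g_x0 hx0 hx01 hx1 hnu0 hnu1 hr0 hr0x hr1x hr1
  have h1 := g_x1 hx0 hx01 hx1 hnu0 hnu1 hr0 hr0x hr1x hr1
  obtain ⟨p, q, hp, hq, hpq, key⟩ := g_concave_lt hx0 hx01 hx1 hnu0 hnu1 hr0 hr0x hr1x hr1
    (show x0 ∈ Set.Ioo (0:ℝ) 1 from ⟨hx0, by linarith⟩)
    (show x1 ∈ Set.Ioo (0:ℝ) 1 from ⟨by linarith, hx1⟩)
    (show r1 ∈ Set.Ioo (0:ℝ) 1 from ⟨by linarith, hr1⟩) hx01 hr1x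
  rw [h0, h1] at key
  nlinarith [key, hp, hq]

lemma nu_left_le {t : ℝ} (ht0 : 0 < t) (htr : t ≤ r0) : nu t ≤ nu r0 := by
  rcases eq_or_lt_of_le htr with rfl | hlt
  · exact le_refl _
  · have h0 := g_x0 hx0 hx01 hx1 hnu0 hnu1 hr0 hr0x hr1x hr1
    have hgr0 := g_r0_neg hx0 hx01 hx1 hnu0 hnu1 hr0 hr0x hr1x hr1
    obtain ⟨p, q, hp, hq, hpq, key⟩ := g_concave_lt hx0 hx01 hx1 hnu0 hnu1 hr0 hr0x hr1x hr1
      (show t ∈ Set.Ioo (0:ℝ) 1 from ⟨ht0, by linarith⟩)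
      (show r0 ∈ Set.Ioo (0:ℝ) 1 from ⟨hr0, by linarith⟩)
      (show x0 ∈ Set.Ioo (0:ℝ) 1 from ⟨hx0, by linarith⟩) hlt hr0x
    rw [h0] at key
    have hkey : p * gfun t < gfun r0 := by linarith
    have hgt_neg : gfun t < 0 := by nlinarith [hkey, hp, hgr0]
    have hle : gfun t ≤ gfun r0 := by nlinarith [hkey, hq, hgt_neg, hpq]
    have h1 : Real.log (nu t) ≤ Real.log (nu r0) := by
      rw [log_nu_eq ht0 (by linarith), log_nu_eq hr0 (by linarith)]
      exact hle
    exact (Real.log_le_log_iff (nu_pos ht0 (by linarith)) (nu_pos hr0 (by linarith))).mp h1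

lemma nu_right_le {t : ℝ} (htr : r1 ≤ t) (ht1 : t < 1) : nu t ≤ nu r1 := by
  rcases eq_or_lt_of_le htr with rfl | hlt
  · exact le_refl _
  · have h1' := g_x1 hx0 hx01 hx1 hnu0 hnu1 hr0 hr0x hr1x hr1
    have hgr1 := g_r1_neg hx0 hx01 hx1 hnu0 hnu1 hr0 hr0x hr1x hr1
    obtain ⟨p, q, hp, hq, hpq, key⟩ := g_concave_lt hx0 hx01 hx1 hnu0 hnu1 hr0 hr0x hr1x hr1
      (show x1 ∈ Set.Ioo (0:ℝ) 1 from ⟨by linarith, hx1⟩)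
      (show r1 ∈ Set.Ioo (0:ℝ) 1 from ⟨by linarith, hr1⟩)
      (show t ∈ Set.Ioo (0:ℝ) 1 from ⟨by linarith, ht1⟩) hr1x hlt
    rw [h1'] at key
    have hkey : q * gfun t < gfun r1 := by linarith
    have hgt_neg : gfun t < 0 := by nlinarith [hkey, hq, hgr1]
    have hle : gfun t ≤ gfun r1 := by nlinarith [hkey, hp, hgt_neg, hpq]
    have h1 : Real.log (nu t) ≤ Real.log (nu r1) := by
      rw [log_nu_eq (by linarith) ht1, log_nu_eq (by linarith) hr1]
      exact hle
    exact (Real.log_le_log_iff (nu_pos (by linarith) ht1) (nu_pos (by linarith) hr1)).mp h1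

end Tail

lemma nu_one : nu 1 = Real.exp (-1) := by
  rw [nu, varphi_one]
  norm_num

end Aux

open Finset Real Set in
theorem stmt_17 (x0 x1 : ℝ) (hx0 : 0 < x0) (hx01 : x0 < x1) (hx1 : x1 < 1)
    (hnu0 : nu x0 = 1) (hnu1 : nu x1 = 1)
    (r0 r1 : ℝ) (hr0 : 0 < r0) (hr0x : r0 < x0) (hr1x : x1 < r1) (hr1 : r1 < 1) :
    ∃ Λ C : ℝ, 0 < Λ ∧ Λ < 1 ∧ 0 < C ∧
      ∀ n j : ℕ, 1 ≤ n → 1 ≤ j → j ≤ n →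
        ((j : ℝ) / n ≤ r0 ∨ r1 ≤ (j : ℝ) / n) →
        (n : ℝ) ^ (-(n : ℝ)) * a n j ≤ C * Real.sqrt n * Λ ^ n := by
  have hx0' : x0 < 1 := lt_trans hx01 hx1
  set Λ : ℝ := max (max (nu r0) (nu r1)) (Real.exp (-1)) with hΛdef
  have hnur0pos : 0 < nu r0 := nu_pos hr0 (by linarith)
  have hnur1pos : 0 < nu r1 := nu_pos (by linarith) hr1
  have hΛpos : 0 < Λ :=
    lt_of_lt_of_le hnur0pos (le_trans (le_max_left _ _) (le_max_left _ _))
  have hnur0lt : nu r0 < 1 := by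
    have h := g_r0_neg hx0 hx01 hx1 hnu0 hnu1 hr0 hr0x hr1x hr1
    rw [← log_nu_eq hr0 (by linarith)] at h
    exact (Real.log_neg_iff hnur0pos).mp h
  have hnur1lt : nu r1 < 1 := by
    have h := g_r1_neg hx0 hx01 hx1 hnu0 hnu1 hr0 hr0x hr1x hr1
    rw [← log_nu_eq (by linarith) hr1] at h
    exact (Real.log_neg_iff hnur1pos).mp h
  have hΛlt : Λ < 1 := by
    apply max_lt (max_lt hnur0lt hnur1lt)
    exact Real.exp_lt_one_iff.mpr (by norm_num)
  refine ⟨Λ, Real.exp 1, hΛpos, hΛlt, Real.exp_pos 1, ?_⟩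
  intro n j hn hj hjn hre
  set x : ℝ := (j:ℝ)/n with hxdef
  have hnpos : (0:ℝ) < n := by exact_mod_cast hn
  have hjpos : (0:ℝ) < j := by exact_mod_cast hj
  have hx_nonneg : 0 ≤ x := by positivity
  have hx_le_one : x ≤ 1 := by
    rw [hxdef, div_le_one hnpos]; exact_mod_cast hjn
  have hnu_nn : 0 ≤ nu x := by
    rw [nu]
    have := varphi_nonneg hx_nonneg hx_le_one
    positivity
  have hnu_le : nu x ≤ Λ := by
    rcases eq_or_lt_of_le hjn with rfl | hlt
    · have hx1' : x = 1 := by rw [hxdef]; exact div_self (ne_of_gt hnpos)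
      rw [hx1', nu_one]
      exact le_max_right _ _
    · have hx0p : 0 < x := div_pos hjpos hnpos
      have hx1p : x < 1 := by
        rw [hxdef, div_lt_one hnpos]; exact_mod_cast hlt
      rcases hre with h | h
      · exact le_trans (nu_left_le hx0 hx01 hx1 hnu0 hnu1 hr0 hr0x hr1x hr1 hx0p h)
          (le_trans (le_max_left _ _) (le_max_left _ _))
      · exact le_trans (nu_right_le hx0 hx01 hx1 hnu0 hnu1 hr0 hr0x hr1x hr1 h hx1p)
          (le_trans (le_max_right _ _) (le_max_left _ _))
  -- main quantitative bound
  have hC : (Nat.choose n j : ℝ) ≤ varphi x ^ n := choose_le_varphi_pow n j hn hj hjn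
  have hCnn : (0:ℝ) ≤ (Nat.choose n j : ℝ) := by positivity
  have hA := Asum_le n j hj hjn
  have hsq : Real.sqrt (j:ℝ) ≤ Real.sqrt (n:ℝ) := Real.sqrt_le_sqrt (by exact_mod_cast hjn)
  have hfact : (j.factorial : ℝ) ≤ Real.exp 1 * Real.sqrt n * ((j:ℝ)/Real.exp 1)^j := by
    refine le_trans (factorial_le_stirling j hj) ?_
    gcongr
  have hPnn : 0 ≤ varphi x := varphi_nonneg hx_nonneg hx_le_one
  have hPn_nn : 0 ≤ varphi x ^ n := pow_nonneg hPnn n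
  have hjz : (0:ℝ) ≤ (j:ℝ)^(n-j) := by positivity
  have hjj : (j:ℝ)^j * (j:ℝ)^(n-j) = (j:ℝ)^n := by
    rw [← pow_add]; congr 1; omega
  have hxn : x * n = (j:ℝ) := by
    rw [hxdef, div_mul_cancel₀]; exact ne_of_gt hnpos
  have key : (Nat.choose n j : ℝ) * Asum n j
      ≤ Real.exp 1 * Real.sqrt n * ((j:ℝ)^n * (Real.exp 1 ^ j)⁻¹ * ((varphi x ^ 2)^n)) := by
    calc (Nat.choose n j : ℝ) * Asum n j
        ≤ (Nat.choose n j : ℝ) * ((j.factorial:ℝ) * (Nat.choose n j:ℝ) * (j:ℝ)^(n-j)) :=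
          mul_le_mul_of_nonneg_left hA hCnn
      _ ≤ (varphi x ^ n) * ((Real.exp 1 * Real.sqrt n * ((j:ℝ)/Real.exp 1)^j)
            * (varphi x ^ n) * (j:ℝ)^(n-j)) := by
          apply mul_le_mul hC ?_ ?_ hPn_nn
          · apply mul_le_mul ?_ le_rfl hjz ?_
            · exact mul_le_mul hfact hC hCnn (by positivity)
            · positivity
          · positivity
      _ = Real.exp 1 * Real.sqrt n * ((j:ℝ)^n * (Real.exp 1 ^ j)⁻¹ * ((varphi x ^ 2)^n)) := by
          rw [div_pow, ← hjj]
          have he : Real.exp 1 ^ j ≠ 0 := by positivity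
          field_simp
          ring
  have hnupow : nu x ^ n * (n:ℝ)^n = (j:ℝ)^n * (Real.exp 1 ^ j)⁻¹ * ((varphi x ^ 2)^n) := by
    have h1 : x^n * (n:ℝ)^n = (j:ℝ)^n := by rw [← mul_pow, hxn]
    have h2 : Real.exp (-x) ^ n = (Real.exp 1 ^ j)⁻¹ := by
      rw [← Real.exp_nat_mul, ← Real.exp_nat_mul, ← Real.exp_neg]
      congr 1
      linear_combination -hxn
    calc nu x ^ n * (n:ℝ)^n
        = (x^n * (n:ℝ)^n) * Real.exp (-x)^n * ((varphi x ^ 2)^n) := by rw [nu]; ring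
      _ = (j:ℝ)^n * (Real.exp 1 ^ j)⁻¹ * ((varphi x ^ 2)^n) := by rw [h1, h2]
  have ha_eq : a n j = (Nat.choose n j : ℝ) * Asum n j := by
    have hfne : (j.factorial : ℝ) ≠ 0 := by positivity
    rw [a, stirling2, Asum]
    field_simp
  have hrpow : (n:ℝ)^(-(n:ℝ)) = ((n:ℝ)^n)⁻¹ := by
    rw [Real.rpow_neg (le_of_lt hnpos), Real.rpow_natCast]
  rw [ha_eq, hrpow]
  have hnn_pos : (0:ℝ) < (n:ℝ)^n := by positivity
  calc ((n:ℝ)^n)⁻¹ * ((Nat.choose n j:ℝ) * Asum n j)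
      ≤ ((n:ℝ)^n)⁻¹ * (Real.exp 1 * Real.sqrt n
        * ((j:ℝ)^n * (Real.exp 1 ^ j)⁻¹ * ((varphi x ^ 2)^n))) :=
        mul_le_mul_of_nonneg_left key (by positivity)
    _ = Real.exp 1 * Real.sqrt n * nu x ^ n := by
        rw [← hnupow]
        field_simp
    _ ≤ Real.exp 1 * Real.sqrt n * Λ ^ n := by
        apply mul_le_mul_of_nonneg_left (pow_le_pow_left₀ hnu_nn hnu_le n) (by positivity)
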